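/- Let n ≥ 2 and let N be a permutation-invariant norm on ℝ^n. Let e_1, …, e_n denote the standard basis vectors. Then there exists t ∈ ℝ such that N(t·(1,1,…,1) − e_i) = N(e_1 − e_2) for every i = 1, …, n. In particular, since N(e_i − e_j) = N(e_1 − e_2) for all i ≠ j by permutation invariance, the n+1 points e_1, …, e_n, t·(1,…,1) are pairwise equidistant in the norm N. -/

import Mathlib

/-- `N` is a norm on `ℝ^n`. -/
def IsNorm {n : ℕ} (N : (Fin n → ℝ) → ℝ) : Prop :=
  (∀ x, N x = 0 ↔ x = 0) ∧
  (∀ (c : ℝ) (x : Fin n → ℝ), N (c • x) = |c| * N x) ∧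
  (∀ x y : Fin n → ℝ, N (x + y) ≤ N x + N y)

/-- `N` is permutation-invariant. -/
def PermInvariant {n : ℕ} (N : (Fin n → ℝ) → ℝ) : Prop :=
  ∀ (σ : Equiv.Perm (Fin n)) (x : Fin n → ℝ), N (fun i => x (σ i)) = N x

lemma single_comp {n : ℕ} (σ : Equiv.Perm (Fin n)) (a : Fin n) :
    (fun k => (Pi.single a 1 : Fin n → ℝ) (σ k)) = Pi.single (σ.symm a) 1 := by
  funext k
  simp only [Pi.single_apply]
  by_cases h : k = σ.symm a
  · subst h; simp
  · rw [if_neg, if_neg h]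
    intro hc
    exact h (by rw [← hc]; simp)

lemma pair_eq {n : ℕ} {N : (Fin n → ℝ) → ℝ} (hperm : PermInvariant N)
    (i j i' j' : Fin n) (hij : i ≠ j) (hij' : i' ≠ j') :
    N (Pi.single i 1 - Pi.single j 1) = N (Pi.single i' 1 - Pi.single j' 1) := by
  set τ := Equiv.swap i' i with hτ
  have hτj : τ j' ≠ i := by
    intro h
    have : τ j' = τ i' := by rw [h, hτ, Equiv.swap_apply_left]
    exact hij' (τ.injective this).symm
  set σ := τ.trans (Equiv.swap (τ j') j) with hσ
  have hσi : σ i' = i := by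
    simp only [hσ, Equiv.trans_apply, hτ, Equiv.swap_apply_left]
    rw [Equiv.swap_apply_of_ne_of_ne (Ne.symm hτj) hij]
  have hσj : σ j' = j := by
    simp only [hσ, Equiv.trans_apply, Equiv.swap_apply_left]
  have hsi : σ.symm i = i' := by rw [Equiv.symm_apply_eq, hσi]
  have hsj : σ.symm j = j' := by rw [Equiv.symm_apply_eq, hσj]
  have key := hperm σ (Pi.single i 1 - Pi.single j 1)
  rw [show (fun k => (Pi.single i 1 - Pi.single j 1 : Fin n → ℝ) (σ k))
      = Pi.single (σ.symm i) 1 - Pi.single (σ.symm j) 1 by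
    funext k
    simp only [Pi.sub_apply]
    rw [congrFun (single_comp σ i) k, congrFun (single_comp σ j) k]] at key
  rw [hsi, hsj] at key
  exact key.symm

lemma apex_eq {n : ℕ} {N : (Fin n → ℝ) → ℝ} (hperm : PermInvariant N)
    (t : ℝ) (i i' : Fin n) :
    N (t • (fun _ => (1:ℝ)) - Pi.single i 1) = N (t • (fun _ => (1:ℝ)) - Pi.single i' 1) := by
  set σ := Equiv.swap i' i with hσ
  have hsi : σ.symm i = i' := by rw [Equiv.symm_apply_eq, hσ, Equiv.swap_apply_left]
  have key := hperm σ (t • (fun _ => (1:ℝ)) - Pi.single i 1)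
  rw [show (fun k => (t • (fun _ => (1:ℝ)) - Pi.single i 1 : Fin n → ℝ) (σ k))
      = t • (fun _ => (1:ℝ)) - Pi.single (σ.symm i) 1 by
    funext k
    simp only [Pi.sub_apply, Pi.smul_apply, smul_eq_mul]
    rw [congrFun (single_comp σ i) k]] at key
  rw [hsi] at key
  exact key.symm

/-- For a permutation-invariant norm `N` on `ℝ^n` (`n ≥ 2`) there exists `t ∈ ℝ` such that
`t·(1,…,1)` is at distance `N(e₁ − e₂)` from each standard basis vector `eᵢ`; moreover the
standard basis vectors are pairwise at distance `N(e₁ − e₂)`, so the `n + 1` points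
`e₁, …, eₙ, t·(1,…,1)` are pairwise equidistant. -/
theorem exists_apex_of_permInvariant (n : ℕ) (hn : 2 ≤ n)
    (N : (Fin n → ℝ) → ℝ) (hN : IsNorm N) (hperm : PermInvariant N) :
    ∃ t : ℝ,
      (∀ i : Fin n,
        N (t • (fun _ => (1 : ℝ)) - Pi.single i 1) =
          N (Pi.single (⟨0, by omega⟩ : Fin n) 1 - Pi.single (⟨1, by omega⟩ : Fin n) 1)) ∧
      (∀ i j : Fin n, i ≠ j →
        N (Pi.single i 1 - Pi.single j 1) =
          N (Pi.single (⟨0, by omega⟩ : Fin n) 1 - Pi.single (⟨1, by omega⟩ : Fin n) 1)) := by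
  obtain ⟨h0, hsmul, htri⟩ := hN
  set z0 : Fin n := ⟨0, by omega⟩ with hz0
  set z1 : Fin n := ⟨1, by omega⟩ with hz1
  have hz01 : z0 ≠ z1 := Fin.ne_of_val_ne (by norm_num)
  set p : ℝ := N (Pi.single z0 1 - Pi.single z1 1) with hp
  have hzero : N 0 = 0 := (h0 0).mpr rfl
  have hneg : ∀ x, N (-x) = N x := by
    intro x
    have := hsmul (-1) x
    simpa using this
  have hnn : ∀ x, 0 ≤ N x := by
    intro x
    have h1 : N (x + (-x)) ≤ N x + N (-x) := htri x (-x)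
    rw [add_neg_cancel, hzero, hneg] at h1
    linarith
  have hone : (fun _ => (1:ℝ)) ≠ (0 : Fin n → ℝ) := by
    intro h
    have := congrFun h z0
    norm_num at this
  have hNone : 0 < N (fun _ => (1:ℝ)) :=
    lt_of_le_of_ne (hnn _) (fun h => hone ((h0 _).mp h.symm))
  set f : ℝ → ℝ := fun s => N (s • (fun _ => (1:ℝ)) - Pi.single z0 1) with hf
  -- continuity of f
  have hsub : ∀ x y : Fin n → ℝ, N x - N y ≤ N (x - y) := by
    intro x y
    have := htri (x - y) y
    rw [sub_add_cancel] at this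
    linarith
  have hcont : Continuous f := by
    have : LipschitzWith ⟨N (fun _ => (1:ℝ)), le_of_lt hNone⟩ f := by
      apply LipschitzWith.of_dist_le_mul
      intro x y
      rw [Real.dist_eq, Real.dist_eq]
      have hxy : (x • (fun _ => (1:ℝ)) - Pi.single z0 1) - (y • (fun _ => (1:ℝ)) - Pi.single z0 1)
          = (x - y) • (fun _ => (1:ℝ)) := by
        rw [sub_smul]; abel
      have h1 : f x - f y ≤ |x - y| * N (fun _ => (1:ℝ)) := by
        have := hsub (x • (fun _ => (1:ℝ)) - Pi.single z0 1) (y • (fun _ => (1:ℝ)) - Pi.single z0 1)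
        rw [hxy, hsmul] at this
        exact this
      have h2 : f y - f x ≤ |x - y| * N (fun _ => (1:ℝ)) := by
        have := hsub (y • (fun _ => (1:ℝ)) - Pi.single z0 1) (x • (fun _ => (1:ℝ)) - Pi.single z0 1)
        rw [show (y • (fun _ => (1:ℝ)) - Pi.single z0 1) - (x • (fun _ => (1:ℝ)) - Pi.single z0 1)
            = (y - x) • (fun _ => (1:ℝ)) by rw [sub_smul]; abel, hsmul, abs_sub_comm] at this
        exact this
      rw [abs_sub_le_iff]
      constructor <;> [exact h1.trans_eq (mul_comm _ _); exact h2.trans_eq (mul_comm _ _)]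
    exact this.continuous
  -- lower endpoint a = 1/n
  set a : ℝ := (n : ℝ)⁻¹ with ha
  have hnpos : (0:ℝ) < n := by exact_mod_cast (by omega : 0 < n)
  have hapos : 0 < a := by positivity
  have hterm : ∀ j : Fin n, N (Pi.single j 1 - Pi.single z0 1) ≤ p := by
    intro j
    by_cases hj : j = z0
    · subst hj; rw [sub_self, hzero]; exact hnn _
    · exact le_of_eq (pair_eq hperm j z0 z0 z1 hj hz01)
  have hdecomp : a • (fun _ => (1:ℝ)) - Pi.single z0 1
      = a • ∑ j : Fin n, ((Pi.single j 1 : Fin n → ℝ) - Pi.single z0 1) := by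
    funext k
    simp only [Pi.smul_apply, Pi.sub_apply, smul_eq_mul, Finset.sum_apply]
    have hs1 : ∑ j : Fin n, (Pi.single j 1 : Fin n → ℝ) k = 1 := by
      simp only [Pi.single_apply]
      rw [Finset.sum_ite_eq Finset.univ k (fun _ => (1:ℝ))]
      simp
    rw [Finset.sum_sub_distrib, hs1, Finset.sum_const, Finset.card_univ, Fintype.card_fin,
      nsmul_eq_mul]
    have hne : (n:ℝ) ≠ 0 := ne_of_gt hnpos
    have han : a * (n:ℝ) = 1 := by rw [ha]; field_simp
    have : a * (1 - (n:ℝ) * (Pi.single z0 1 : Fin n → ℝ) k)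
        = a - (a * (n:ℝ)) * (Pi.single z0 1 : Fin n → ℝ) k := by ring
    rw [this, han]
    ring
  have hfa : f a ≤ p := by
    have hsubadd : N (∑ j : Fin n, ((Pi.single j 1 : Fin n → ℝ) - Pi.single z0 1))
        ≤ ∑ j : Fin n, N ((Pi.single j 1 : Fin n → ℝ) - Pi.single z0 1) :=
      Finset.le_sum_of_subadditive N hzero.le htri _ _
    have hsum_le : ∑ j : Fin n, N ((Pi.single j 1 : Fin n → ℝ) - Pi.single z0 1) ≤ (n:ℝ) * p := by
      calc ∑ j : Fin n, N ((Pi.single j 1 : Fin n → ℝ) - Pi.single z0 1)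
          ≤ ∑ _j : Fin n, p := Finset.sum_le_sum (fun j _ => hterm j)
        _ = (n:ℝ) * p := by
            rw [Finset.sum_const, Finset.card_univ, Fintype.card_fin, nsmul_eq_mul]
    calc f a = N (a • ∑ j : Fin n, ((Pi.single j 1 : Fin n → ℝ) - Pi.single z0 1)) := by
          rw [hf]; exact congrArg N hdecomp
      _ = |a| * N (∑ j : Fin n, ((Pi.single j 1 : Fin n → ℝ) - Pi.single z0 1)) := hsmul a _
      _ = a * N (∑ j : Fin n, ((Pi.single j 1 : Fin n → ℝ) - Pi.single z0 1)) := by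
          rw [abs_of_pos hapos]
      _ ≤ a * ((n:ℝ) * p) := by
          apply mul_le_mul_of_nonneg_left (le_trans hsubadd hsum_le) (le_of_lt hapos)
      _ = p := by
          rw [ha]; field_simp
  -- upper endpoint
  set b : ℝ := max a ((p + N (Pi.single z0 1)) / N (fun _ => (1:ℝ))) with hb
  have hab : a ≤ b := le_max_left _ _
  have hfb : p ≤ f b := by
    have h1 : N (b • (fun _ => (1:ℝ))) ≤ f b + N (Pi.single z0 1) := by
      have := htri (b • (fun _ => (1:ℝ)) - Pi.single z0 1) (Pi.single z0 1)
      rw [sub_add_cancel] at this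
      exact this
    have hbpos : 0 < b := lt_of_lt_of_le hapos hab
    have h2 : N (b • (fun _ => (1:ℝ))) = b * N (fun _ => (1:ℝ)) := by
      rw [hsmul, abs_of_pos hbpos]
    have h3 : p + N (Pi.single z0 1) ≤ b * N (fun _ => (1:ℝ)) := by
      have : (p + N (Pi.single z0 1)) / N (fun _ => (1:ℝ)) ≤ b := le_max_right _ _
      calc p + N (Pi.single z0 1)
          = ((p + N (Pi.single z0 1)) / N (fun _ => (1:ℝ))) * N (fun _ => (1:ℝ)) := by
            field_simp
        _ ≤ b * N (fun _ => (1:ℝ)) := mul_le_mul_of_nonneg_right this (le_of_lt hNone)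
    linarith
  -- intermediate value theorem
  have hmem : p ∈ Set.Icc (f a) (f b) := ⟨hfa, hfb⟩
  obtain ⟨t, _, ht⟩ := intermediate_value_Icc hab hcont.continuousOn hmem
  refine ⟨t, ?_, ?_⟩
  · intro i
    rw [apex_eq hperm t i z0]
    exact ht
  · intro i j hij
    exact pair_eq hperm i j z0 z1 hij hz01
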